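/- arXiv:2605.31076 — 4 statements merged into one kernel-verified Lean document; each statement's English description precedes it below -/
import Mathlib

section
/- For every nonzero ω ∈ ℝ³, the left Jacobian satisfies the Rodrigues-type closed form ∫₀¹ exp(s·hat(ω)) ds = I + ((1 − cos‖ω‖)/‖ω‖²)·hat(ω) + ((‖ω‖ − sin‖ω‖)/‖ω‖³)·hat(ω)², where ‖ω‖ is the Euclidean norm of ω. -/
open scoped Matrix
open NormedSpace

attribute [local instance] Matrix.frobeniusNormedAddCommGroup Matrix.frobeniusNormedSpace
attribute [local instance] Matrix.frobeniusNormedRing Matrix.frobeniusNormedAlgebra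

/-- The hat map: `hat ω` is the skew-symmetric matrix with `hat ω *ᵥ x = ω × x`. -/
def hat (ω : EuclideanSpace ℝ (Fin 3)) : Matrix (Fin 3) (Fin 3) ℝ :=
  !![0, -ω 2, ω 1; ω 2, 0, -ω 0; -ω 1, ω 0, 0]

lemma norm_sq_eq (ω : EuclideanSpace ℝ (Fin 3)) :
    ‖ω‖ ^ 2 = ω 0 ^ 2 + ω 1 ^ 2 + ω 2 ^ 2 := by
  rw [EuclideanSpace.norm_eq, Real.sq_sqrt (by positivity)]
  simp [Fin.sum_univ_three, Real.norm_eq_abs, sq_abs]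

lemma hat_cube (ω : EuclideanSpace ℝ (Fin 3)) :
    hat ω * hat ω * hat ω = (-(‖ω‖ ^ 2)) • hat ω := by
  rw [norm_sq_eq]
  ext i j
  fin_cases i <;> fin_cases j <;>
    simp [hat, Matrix.mul_apply, Fin.sum_univ_three, Matrix.smul_apply] <;> ring

lemma rodrigues (ω : EuclideanSpace ℝ (Fin 3)) (hω : ω ≠ 0) (t : ℝ) :
    exp (t • hat ω) = 1 + (Real.sin (t * ‖ω‖) / ‖ω‖) • hat ω
      + ((1 - Real.cos (t * ‖ω‖)) / ‖ω‖ ^ 2) • (hat ω * hat ω) := by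
  set θ := ‖ω‖ with hθdef
  have hθ : θ ≠ 0 := norm_ne_zero_iff.mpr hω
  set A := hat ω with hA
  set R : ℝ → Matrix (Fin 3) (Fin 3) ℝ := fun t =>
    1 + (Real.sin (t * θ) / θ) • A + ((1 - Real.cos (t * θ)) / θ ^ 2) • (A * A) with hRdef
  have key : ∀ s : ℝ, R s * A = Real.cos (s * θ) • A + (Real.sin (s * θ) / θ) • (A * A) := by
    intro s
    have h3 : (A * A) * A = (-(θ ^ 2)) • A := hat_cube ω
    rw [hRdef]
    simp only [add_mul, one_mul, smul_mul_assoc, h3, smul_smul]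
    have : (1 - Real.cos (s * θ)) / θ ^ 2 * -θ ^ 2 = -(1 - Real.cos (s * θ)) := by
      field_simp
    rw [this]
    module
  have hR : ∀ s : ℝ, HasDerivAt R
      (Real.cos (s * θ) • A + (Real.sin (s * θ) / θ) • (A * A)) s := by
    intro s
    have h1 : HasDerivAt (fun u : ℝ => Real.sin (u * θ) / θ) (Real.cos (s * θ)) s := by
      have := ((Real.hasDerivAt_sin (s * θ)).comp s
        ((hasDerivAt_id s).mul_const θ)).div_const θ
      simpa [mul_div_assoc, mul_div_cancel_right₀ _ hθ] using this
    have h2 : HasDerivAt (fun u : ℝ => (1 - Real.cos (u * θ)) / θ ^ 2)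
        (Real.sin (s * θ) / θ) s := by
      have := (((Real.hasDerivAt_cos (s * θ)).comp s
        ((hasDerivAt_id s).mul_const θ)).const_sub 1).div_const (θ ^ 2)
      have e : Real.sin (s * θ) * θ / θ ^ 2 = Real.sin (s * θ) / θ := by
        field_simp
      simpa [e] using this
    have := ((h1.smul_const A).const_add (1 : Matrix (Fin 3) (Fin 3) ℝ)).fun_add
      (h2.smul_const (A * A))
    exact this
  have hderiv : ∀ s : ℝ, HasDerivAt (fun u => R u * exp (u • (-A))) 0 s := by
    intro s
    have hE := hasDerivAt_exp_smul_const (-A) s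
    have hcomm : exp (s • (-A)) * (-A) = (-A) * exp (s • (-A)) :=
      ((((Commute.refl A).neg_left.smul_left s).exp_left).neg_right).eq
    have hmul := (hR s).mul hE
    have h0 : (Real.cos (s * θ) • A + (Real.sin (s * θ) / θ) • (A * A)) * exp (s • (-A))
        + R s * (exp (s • (-A)) * (-A)) = 0 := by
      rw [hcomm, neg_mul, mul_neg, ← mul_assoc, key s, add_neg_cancel]
    exact h0 ▸ hmul
  have hconst : ∀ s : ℝ, R s * exp (s • (-A)) = 1 := by
    intro s
    have := is_const_of_deriv_eq_zero (f := fun u => R u * exp (u • (-A)))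
      (fun x => (hderiv x).differentiableAt) (fun x => (hderiv x).deriv) s 0
    rw [this]
    simp [hRdef, exp_zero]
  have hinv : exp (t • (-A)) * exp (t • A) = 1 := by
    refine (exp_add_of_commute (((Commute.refl A).neg_left.smul_left t).smul_right t)).symm.trans ?_
    simp [exp_zero]
  calc exp (t • A) = (R t * exp (t • (-A))) * exp (t • A) := by rw [hconst t, one_mul]
    _ = R t * (exp (t • (-A)) * exp (t • A)) := by rw [mul_assoc]
    _ = R t := by rw [hinv, mul_one]

theorem stmt2 (ω : EuclideanSpace ℝ (Fin 3)) (hω : ω ≠ 0) :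
    (∫ s in (0:ℝ)..1, exp (s • hat ω)) =
      1 + ((1 - Real.cos ‖ω‖) / ‖ω‖ ^ 2) • hat ω
        + ((‖ω‖ - Real.sin ‖ω‖) / ‖ω‖ ^ 3) • (hat ω * hat ω) := by
  set θ := ‖ω‖ with hθdef
  have hθ : θ ≠ 0 := norm_ne_zero_iff.mpr hω
  set A := hat ω with hA
  have hcong : (∫ s in (0:ℝ)..1, exp (s • A)) =
      ∫ s in (0:ℝ)..1, (1 + (Real.sin (s * θ) / θ) • A
        + ((1 - Real.cos (s * θ)) / θ ^ 2) • (A * A)) :=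
    intervalIntegral.integral_congr fun s _ => rodrigues ω hω s
  have hc1 : Continuous fun s : ℝ => (Real.sin (s * θ) / θ) • A := by fun_prop
  have hc2 : Continuous fun s : ℝ => ((1 - Real.cos (s * θ)) / θ ^ 2) • (A * A) := by fun_prop
  have hI1 := intervalIntegrable_const (μ := MeasureTheory.volume) (a := (0:ℝ)) (b := 1)
    (c := (1 : Matrix (Fin 3) (Fin 3) ℝ))
  rw [hcong, intervalIntegral.integral_add (hI1.add (hc1.intervalIntegrable 0 1))
      (hc2.intervalIntegrable 0 1),
    intervalIntegral.integral_add hI1 (hc1.intervalIntegrable 0 1),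
    intervalIntegral.integral_const, intervalIntegral.integral_smul_const,
    intervalIntegral.integral_smul_const]
  have e1 : (∫ s in (0:ℝ)..1, Real.sin (s * θ) / θ) = (1 - Real.cos θ) / θ ^ 2 := by
    rw [intervalIntegral.integral_div,
      intervalIntegral.integral_comp_mul_right Real.sin hθ]
    simp [integral_sin]
    field_simp
  have e2 : (∫ s in (0:ℝ)..1, (1 - Real.cos (s * θ)) / θ ^ 2) = (θ - Real.sin θ) / θ ^ 3 := by
    rw [intervalIntegral.integral_div,
      intervalIntegral.integral_sub intervalIntegrable_const
        ((by fun_prop : Continuous fun s : ℝ => Real.cos (s * θ)).intervalIntegrable 0 1),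
      intervalIntegral.integral_comp_mul_right Real.cos hθ]
    simp [integral_cos]
    field_simp
  rw [e1, e2]
  norm_num
end

section
/- For every ω ∈ ℝ³ and v ∈ ℝ³, the matrix exponential of the se(3) element X(ω,v) has the block form exp(X(ω,v)) = [[exp(hat(ω)), A(hat(ω))·v],[0, 1]], i.e. its top-left 3×3 block equals exp(hat(ω)), its top-right 3×1 block equals (∫₀¹ exp(s·hat(ω)) ds)·v, and its bottom row equals (0,0,0,1). -/
open scoped Matrix
open NormedSpace

attribute [local instance] Matrix.frobeniusNormedAddCommGroup Matrix.frobeniusNormedSpace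

/-- The homogeneous 4×4 representation of the se(3) element `(ω, v)`. -/
def seX (ω v : EuclideanSpace ℝ (Fin 3)) : Matrix (Fin 4) (Fin 4) ℝ :=
  Matrix.of fun i j =>
    if hi : (i : ℕ) < 3 then
      if hj : (j : ℕ) < 3 then hat ω ⟨i, hi⟩ ⟨j, hj⟩ else v ⟨i, hi⟩
    else 0

attribute [local instance] Matrix.frobeniusNormedRing Matrix.frobeniusNormedAlgebra

/-- Entry evaluation as a continuous linear map. -/
noncomputable def entryCLM {n : ℕ} (i j : Fin n) : Matrix (Fin n) (Fin n) ℝ →L[ℝ] ℝ :=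
  LinearMap.toContinuousLinearMap
    { toFun := fun M => M i j, map_add' := fun _ _ => rfl, map_smul' := fun _ _ => rfl }

lemma exp_entry {n : ℕ} (M : Matrix (Fin n) (Fin n) ℝ) (i j : Fin n) :
    exp M i j = ∑' k : ℕ, ((Nat.factorial k : ℝ))⁻¹ * (M ^ k) i j := by
  have h := (entryCLM i j).map_tsum (expSeries_summable' (𝕂 := ℝ) M)
  rw [exp_eq_tsum (𝕂 := ℝ)]
  exact h.trans rfl

lemma seX_tl (ω v : EuclideanSpace ℝ (Fin 3)) (i j : Fin 3) :
    seX ω v i.castSucc j.castSucc = hat ω i j := by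
  simp only [seX, Matrix.of_apply, Fin.coe_castSucc]
  rw [dif_pos i.isLt, dif_pos j.isLt]

lemma seX_tr (ω v : EuclideanSpace ℝ (Fin 3)) (i : Fin 3) :
    seX ω v i.castSucc (Fin.last 3) = v i := by
  simp only [seX, Matrix.of_apply, Fin.coe_castSucc, Fin.val_last]
  rw [dif_pos i.isLt, dif_neg (lt_irrefl 3)]

lemma seX_bot (ω v : EuclideanSpace ℝ (Fin 3)) (j : Fin 4) :
    seX ω v (Fin.last 3) j = 0 := by
  simp only [seX, Matrix.of_apply, Fin.val_last]
  rw [dif_neg (lt_irrefl 3)]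

lemma powTL (ω v : EuclideanSpace ℝ (Fin 3)) (n : ℕ) (i j : Fin 3) :
    (seX ω v ^ n) i.castSucc j.castSucc = (hat ω ^ n) i j := by
  induction n generalizing i j with
  | zero => simp [Matrix.one_apply, Fin.castSucc_inj]
  | succ n ih =>
    rw [pow_succ, pow_succ, Matrix.mul_apply, Matrix.mul_apply, Fin.sum_univ_castSucc]
    simp only [seX_bot, seX_tl, mul_zero, add_zero, ih]

lemma powBot (ω v : EuclideanSpace ℝ (Fin 3)) (n : ℕ) (j : Fin 4) :
    (seX ω v ^ (n + 1)) (Fin.last 3) j = 0 := by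
  rw [pow_succ', Matrix.mul_apply]
  simp only [seX_bot, zero_mul, Finset.sum_const_zero]

lemma expTL (ω v : EuclideanSpace ℝ (Fin 3)) (i j : Fin 3) :
    exp (seX ω v) i.castSucc j.castSucc = exp (hat ω) i j := by
  rw [exp_entry, exp_entry]
  exact tsum_congr fun n => by rw [powTL]

lemma hat_smul (s : ℝ) (ω : EuclideanSpace ℝ (Fin 3)) :
    hat (s • ω) = s • hat ω := by
  ext i j
  fin_cases i <;> fin_cases j <;> simp [hat]

lemma smul_seX (s : ℝ) (ω v : EuclideanSpace ℝ (Fin 3)) :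
    s • seX ω v = seX (s • ω) (s • v) := by
  ext i j
  simp only [Matrix.smul_apply, seX, Matrix.of_apply, smul_eq_mul]
  by_cases hi : (i : ℕ) < 3
  · by_cases hj : (j : ℕ) < 3
    · simp only [dif_pos hi, dif_pos hj, hat_smul, Matrix.smul_apply, smul_eq_mul]
    · simp only [dif_pos hi, dif_neg hj]
      simp
  · simp only [dif_neg hi, mul_zero]

lemma cont_exp_smul {n : ℕ} (M : Matrix (Fin n) (Fin n) ℝ) :
    Continuous fun s : ℝ => exp (s • M) :=
  exp_continuous.comp (continuous_id.smul continuous_const)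

theorem stmt3 (ω v : EuclideanSpace ℝ (Fin 3)) :
    (∀ i j : Fin 3, exp (seX ω v) i.castSucc j.castSucc = exp (hat ω) i j) ∧
    (∀ i : Fin 3, exp (seX ω v) i.castSucc (Fin.last 3) =
      ((∫ s in (0:ℝ)..1, exp (s • hat ω)) *ᵥ ⇑v) i) ∧
    (∀ j : Fin 3, exp (seX ω v) (Fin.last 3) j.castSucc = 0) ∧
    exp (seX ω v) (Fin.last 3) (Fin.last 3) = 1 := by
  refine ⟨expTL ω v, ?_, ?_, ?_⟩
  · -- top-right block
    intro i
    set X := seX ω v with hX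
    have hint :=
      (((cont_exp_smul X).mul continuous_const).intervalIntegrable (u := fun s : ℝ => exp (s • X) * X) (μ := MeasureTheory.volume) 0 1)
    have ftc : (∫ s in (0:ℝ)..1, exp (s • X) * X) = exp X - 1 := by
      have := intervalIntegral.integral_eq_sub_of_hasDerivAt
        (f := fun t : ℝ => exp (t • X))
        (fun s _ => hasDerivAt_exp_smul_const X s) hint
      beta_reduce at this
      rwa [one_smul, zero_smul, exp_zero] at this
    have e1 : (∫ s in (0:ℝ)..1, (exp (s • X) * X) i.castSucc (Fin.last 3))
        = (exp X - 1) i.castSucc (Fin.last 3) := by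
      rw [← ftc]
      exact (entryCLM i.castSucc (Fin.last 3)).intervalIntegral_comp_comm hint
    have hne : (1 : Matrix (Fin 4) (Fin 4) ℝ) i.castSucc (Fin.last 3) = 0 :=
      Matrix.one_apply_ne (Fin.castSucc_lt_last i).ne
    have e2 : ∀ s : ℝ, (exp (s • X) * X) i.castSucc (Fin.last 3)
        = ∑ k : Fin 3, exp (s • hat ω) i k * v k := by
      intro s
      rw [Matrix.mul_apply, Fin.sum_univ_castSucc]
      have h1 : ∀ k : Fin 3, exp (s • X) i.castSucc k.castSucc
          = exp (s • hat ω) i k := by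
        intro k
        rw [hX, smul_seX, expTL, hat_smul]
      simp only [hX, seX_bot, seX_tr, mul_zero, add_zero, h1]
      simp only [← hX, h1]
    have hexpint := (cont_exp_smul (hat ω)).intervalIntegrable (μ := MeasureTheory.volume) 0 1
    have e3 : (∫ s in (0:ℝ)..1, (exp (s • X) * X) i.castSucc (Fin.last 3))
        = ((∫ s in (0:ℝ)..1, exp (s • hat ω)) *ᵥ ⇑v) i := by
      simp only [e2]
      rw [intervalIntegral.integral_finset_sum]
      · rw [Matrix.mulVec]
        congr 1
        funext k
        rw [intervalIntegral.integral_mul_const]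
        congr 1
        exact (entryCLM i k).intervalIntegral_comp_comm hexpint
      · intro k _
        exact (((entryCLM i k).continuous.comp (cont_exp_smul (hat ω))).mul
          continuous_const).intervalIntegrable 0 1
    rw [← e3, e1, Matrix.sub_apply, hne, sub_zero]
  · intro j
    rw [exp_entry]
    have h : ∀ n : ℕ, ((Nat.factorial n : ℝ))⁻¹ * ((seX ω v ^ n) (Fin.last 3) j.castSucc) = 0 := by
      intro n
      cases n with
      | zero => simp only [pow_zero, Matrix.one_apply_ne (Fin.castSucc_lt_last j).ne', mul_zero]
      | succ n => simp only [powBot, mul_zero]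
    rw [tsum_congr h, tsum_zero]
  · rw [exp_entry, tsum_eq_single 0]
    · simp [Matrix.one_apply]
    · intro n hn
      obtain ⟨m, rfl⟩ := Nat.exists_eq_succ_of_ne_zero hn
      simp only [Nat.succ_eq_add_one, powBot, mul_zero]
end

section
/- Let Ω be a 3×3 real skew-symmetric matrix and let H be any 3×3 real matrix. Then the Fréchet derivative of the matrix exponential at Ω satisfies ‖D exp_Ω[H]‖_F ≤ ‖H‖_F, i.e. the Fréchet derivative of exp restricted to the point Ω has operator norm at most 1 with respect to the Frobenius norm. -/
open scoped Matrix
open NormedSpace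

-- Matrices carry the Frobenius norm throughout this file.
attribute [local instance] Matrix.frobeniusNormedAddCommGroup Matrix.frobeniusNormedSpace
section Aux
attribute [local instance] Matrix.frobeniusNormedRing Matrix.frobeniusNormedAlgebra

local notation "M" => Matrix (Fin 3) (Fin 3) ℝ

set_option maxRecDepth 4000

theorem sq_norm_trace (A : M) : ‖A‖ ^ 2 = (Aᵀ * A).trace := by
  rw [Matrix.frobenius_norm_def]
  rw [← Real.rpow_natCast _ 2, ← Real.rpow_mul (by positivity)]
  norm_num
  rw [Matrix.trace]
  simp only [Matrix.diag, Matrix.mul_apply, Matrix.transpose_apply, Real.norm_eq_abs, sq_abs]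
  rw [Finset.sum_comm]
  congr 1; ext i; congr 1; ext j; ring

theorem mul_isometry {U : M} (hU : Uᵀ * U = 1) (X : M) : ‖U * X‖ = ‖X‖ := by
  have h : ‖U * X‖ ^ 2 = ‖X‖ ^ 2 := by
    rw [sq_norm_trace, sq_norm_trace, Matrix.transpose_mul, Matrix.mul_assoc,
      ← Matrix.mul_assoc Uᵀ, hU, Matrix.one_mul]
  nlinarith [norm_nonneg (U * X), norm_nonneg X]

theorem exp_skew_orth {S : M} (hS : Sᵀ = -S) : (exp S)ᵀ * exp S = 1 := by
  rw [← Matrix.exp_transpose, hS,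
    ← Matrix.exp_add_of_commute (-S) S (Commute.neg_left (Commute.refl S))]
  simp

theorem exp_skew_isometry {S : M} (hS : Sᵀ = -S) (X : M) : ‖exp S * X‖ = ‖X‖ :=
  mul_isometry (exp_skew_orth hS) X

theorem exp_skew_isometry_right {S : M} (hS : Sᵀ = -S) (X : M) : ‖X * exp S‖ = ‖X‖ := by
  have hS' : (-S)ᵀ = -(-S) := by rw [Matrix.transpose_neg, hS]
  rw [← Matrix.frobenius_norm_transpose, Matrix.transpose_mul, ← Matrix.exp_transpose, hS,
    exp_skew_isometry hS', Matrix.frobenius_norm_transpose]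

theorem smul_skew {S : M} (hS : Sᵀ = -S) (c : ℝ) : (c • S)ᵀ = -(c • S) := by
  rw [Matrix.transpose_smul, hS, smul_neg]

theorem duhamel (A B : M) :
    exp B - exp A
      = ∫ s in (0:ℝ)..1, exp ((1 - s) • A) * ((B - A) * exp (s • B)) := by
  have hcont : Continuous fun s : ℝ => exp ((1 - s) • A) * ((B - A) * exp (s • B)) := by
    exact ((exp_continuous.comp (by continuity)).mul
      (continuous_const.mul (exp_continuous.comp (by continuity))))
  have hderiv : ∀ s ∈ Set.uIcc (0:ℝ) 1,
      HasDerivAt (fun s : ℝ => exp ((1 - s) • A) * exp (s • B))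
        (exp ((1 - s) • A) * ((B - A) * exp (s • B))) s := by
    intro s _
    have hu : HasDerivAt (fun s : ℝ => exp ((1 - s) • A))
        ((-1 : ℝ) • (exp ((1 - s) • A) * A)) s := by
      exact (hasDerivAt_exp_smul_const A ((1:ℝ) - s)).scomp s
        (((hasDerivAt_id s).const_sub 1))
    have hv : HasDerivAt (fun s : ℝ => exp (s • B)) (B * exp (s • B)) s :=
      hasDerivAt_exp_smul_const' B s
    have := hu.mul hv
    refine this.congr_deriv ?_
    simp only [neg_smul, one_smul]
    noncomm_ring
  have := intervalIntegral.integral_eq_sub_of_hasDerivAt hderiv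
    (hcont.intervalIntegrable 0 1)
  rw [this]
  norm_num [NormedSpace.exp_zero]

theorem norm_pow_le1 (X : M) (n : ℕ) : ‖X ^ n‖ ≤ ‖(1 : M)‖ * ‖X‖ ^ n := by
  induction n with
  | zero => simp
  | succ n ih =>
    rw [pow_succ, pow_succ]
    calc ‖X ^ n * X‖ ≤ ‖X ^ n‖ * ‖X‖ := norm_mul_le _ _
    _ ≤ ‖(1 : M)‖ * ‖X‖ ^ n * ‖X‖ := by
        exact mul_le_mul_of_nonneg_right ih (norm_nonneg _)
    _ = ‖(1 : M)‖ * (‖X‖ ^ n * ‖X‖) := by ring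

theorem norm_exp_le (X : M) : ‖exp X‖ ≤ ‖(1 : M)‖ * Real.exp ‖X‖ := by
  have hterm : ∀ n : ℕ, ‖((n.factorial : ℝ)⁻¹ : ℝ) • X ^ n‖ ≤ ‖(1 : M)‖ * (‖X‖ ^ n / n.factorial) := by
    intro n
    rw [norm_smul, norm_inv, Real.norm_natCast]
    calc ((n.factorial : ℝ))⁻¹ * ‖X ^ n‖ ≤ ((n.factorial : ℝ))⁻¹ * (‖(1 : M)‖ * ‖X‖ ^ n) := by
          exact mul_le_mul_of_nonneg_left (norm_pow_le1 X n) (by positivity)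
    _ = ‖(1 : M)‖ * (‖X‖ ^ n / n.factorial) := by ring
  have hsum2 : Summable fun n : ℕ => ‖(1 : M)‖ * (‖X‖ ^ n / n.factorial) :=
    (Real.summable_pow_div_factorial ‖X‖).mul_left _
  have hsum1 : Summable fun n : ℕ => ‖((n.factorial : ℝ)⁻¹ : ℝ) • X ^ n‖ :=
    Summable.of_nonneg_of_le (fun n => norm_nonneg _) hterm hsum2
  calc ‖exp X‖ = ‖∑' n : ℕ, ((n.factorial : ℝ)⁻¹ : ℝ) • X ^ n‖ := by rw [exp_eq_tsum ℝ]
  _ ≤ ∑' n : ℕ, ‖((n.factorial : ℝ)⁻¹ : ℝ) • X ^ n‖ := norm_tsum_le_tsum_norm hsum1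
  _ ≤ ∑' n : ℕ, ‖(1 : M)‖ * (‖X‖ ^ n / n.factorial) := Summable.tsum_le_tsum hterm hsum1 hsum2
  _ = ‖(1 : M)‖ * ∑' n : ℕ, ‖X‖ ^ n / n.factorial := tsum_mul_left
  _ = ‖(1 : M)‖ * Real.exp ‖X‖ := by
      rw [Real.exp_eq_exp_ℝ, exp_eq_tsum_div]

theorem exp_add_sub_exp_bound {S : M} (hS : Sᵀ = -S) (K : M) :
    ‖exp (S + K) - exp S‖ ≤ ‖K‖ * (‖(1 : M)‖ * Real.exp (‖S‖ + ‖K‖)) := by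
  rw [duhamel S (S + K)]
  have h := intervalIntegral.norm_integral_le_of_norm_le_const
    (a := (0:ℝ)) (b := 1) (C := ‖K‖ * (‖(1 : M)‖ * Real.exp (‖S‖ + ‖K‖)))
    (f := fun s => exp ((1 - s) • S) * ((S + K - S) * exp (s • (S + K)))) ?_
  · simpa using h
  intro s hs
  rw [Set.uIoc_of_le (by norm_num : (0:ℝ) ≤ 1)] at hs
  rw [add_sub_cancel_left, exp_skew_isometry (smul_skew hS (1 - s))]
  calc ‖K * exp (s • (S + K))‖ ≤ ‖K‖ * ‖exp (s • (S + K))‖ := norm_mul_le _ _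
  _ ≤ ‖K‖ * (‖(1 : M)‖ * Real.exp ‖s • (S + K)‖) :=
      mul_le_mul_of_nonneg_left (norm_exp_le _) (norm_nonneg _)
  _ ≤ ‖K‖ * (‖(1 : M)‖ * Real.exp (‖S‖ + ‖K‖)) := by
      have hb : ‖s • (S + K)‖ ≤ ‖S‖ + ‖K‖ := by
        rw [norm_smul, Real.norm_eq_abs, abs_of_pos hs.1]
        calc s * ‖S + K‖ ≤ 1 * ‖S + K‖ :=
            mul_le_mul_of_nonneg_right hs.2 (norm_nonneg _)
        _ = ‖S + K‖ := one_mul _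
        _ ≤ ‖S‖ + ‖K‖ := norm_add_le _ _
      gcongr

set_option maxHeartbeats 1000000 in
theorem key_bound (Ω : M) (hΩ : Ωᵀ = -Ω) (H : M) {t : ℝ} (ht : t ∈ Set.Ioc (0:ℝ) 1) :
    ‖exp (Ω + t • H) - exp Ω‖
      ≤ t * (‖H‖ + ‖H‖ * (t * ‖H‖ * (‖(1 : M)‖ * Real.exp (‖Ω‖ + ‖H‖)))) := by
  set E : ℝ := ‖(1 : M)‖ * Real.exp (‖Ω‖ + ‖H‖) with hE
  have hE0 : 0 ≤ E := by positivity
  rw [duhamel Ω (Ω + t • H)]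
  have h := intervalIntegral.norm_integral_le_of_norm_le_const
    (a := (0:ℝ)) (b := 1) (C := t * (‖H‖ + ‖H‖ * (t * ‖H‖ * E)))
    (f := fun s => exp ((1 - s) • Ω) * ((Ω + t • H - Ω) * exp (s • (Ω + t • H)))) ?_
  · simpa using h
  intro s hs
  rw [Set.uIoc_of_le (by norm_num : (0:ℝ) ≤ 1)] at hs
  rw [add_sub_cancel_left, exp_skew_isometry (smul_skew hΩ (1 - s)), smul_mul_assoc,
    norm_smul, Real.norm_eq_abs, abs_of_pos ht.1]
  have hmain : ‖H * exp (s • (Ω + t • H))‖ ≤ ‖H‖ + ‖H‖ * (t * ‖H‖ * E) := by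
    have hsplit : H * exp (s • (Ω + t • H))
        = H * exp (s • Ω) + H * (exp (s • (Ω + t • H)) - exp (s • Ω)) := by
      noncomm_ring
    rw [hsplit]
    refine le_trans (norm_add_le _ _) ?_
    have h1 : ‖H * exp (s • Ω)‖ = ‖H‖ := exp_skew_isometry_right (smul_skew hΩ s) H
    have h2 : ‖exp (s • (Ω + t • H)) - exp (s • Ω)‖ ≤ t * ‖H‖ * E := by
      have hrw : s • (Ω + t • H) = s • Ω + (s * t) • H := by
        rw [smul_add, smul_smul]
      rw [hrw]
      refine le_trans (exp_add_sub_exp_bound (smul_skew hΩ s) ((s * t) • H)) ?_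
      have hn1 : ‖(s * t) • H‖ ≤ t * ‖H‖ := by
        rw [norm_smul, Real.norm_eq_abs, abs_of_pos (mul_pos hs.1 ht.1)]
        calc s * t * ‖H‖ ≤ 1 * t * ‖H‖ := by
              have := mul_le_mul_of_nonneg_right hs.2 (le_of_lt ht.1)
              nlinarith [norm_nonneg H]
        _ = t * ‖H‖ := by ring
      have hexp : Real.exp (‖s • Ω‖ + ‖(s * t) • H‖) ≤ Real.exp (‖Ω‖ + ‖H‖) := by
        apply Real.exp_le_exp.mpr
        have hΩb : ‖s • Ω‖ ≤ ‖Ω‖ := by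
          rw [norm_smul, Real.norm_eq_abs, abs_of_pos hs.1]
          nlinarith [norm_nonneg Ω, hs.2]
        have hHb : ‖(s * t) • H‖ ≤ ‖H‖ := by
          refine le_trans hn1 ?_
          nlinarith [norm_nonneg H, ht.2]
        linarith
      have hfac : ‖(1 : M)‖ * Real.exp (‖s • Ω‖ + ‖(s * t) • H‖)
          ≤ ‖(1 : M)‖ * Real.exp (‖Ω‖ + ‖H‖) :=
        mul_le_mul_of_nonneg_left hexp (norm_nonneg _)
      exact mul_le_mul hn1 hfac
        (mul_nonneg (norm_nonneg _) (Real.exp_pos _).le)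
        (mul_nonneg ht.1.le (norm_nonneg _))
    calc ‖H * exp (s • Ω)‖ + ‖H * (exp (s • (Ω + t • H)) - exp (s • Ω))‖
        ≤ ‖H‖ + ‖H‖ * ‖exp (s • (Ω + t • H)) - exp (s • Ω)‖ := by
          rw [h1]; gcongr; exact norm_mul_le _ _
    _ ≤ ‖H‖ + ‖H‖ * (t * ‖H‖ * E) := by gcongr
  exact mul_le_mul_of_nonneg_left hmain (le_of_lt ht.1)

theorem stmt7_aux (Ω : Matrix (Fin 3) (Fin 3) ℝ) (hΩ : Ωᵀ = -Ω)
    (H : Matrix (Fin 3) (Fin 3) ℝ) :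
    ‖fderiv ℝ (exp : Matrix (Fin 3) (Fin 3) ℝ → Matrix (Fin 3) (Fin 3) ℝ) Ω H‖ ≤ ‖H‖ := by
  set L := fderiv ℝ (exp : M → M) Ω with hL
  set E : ℝ := ‖(1 : M)‖ * Real.exp (‖Ω‖ + ‖H‖) with hE
  -- the curve t ↦ exp (Ω + t • H) has derivative L H at 0
  have hdiff : HasFDerivAt (exp : M → M) L Ω :=
    (NormedSpace.exp_analytic Ω).differentiableAt.hasFDerivAt
  have hline : HasDerivAt (fun t : ℝ => Ω + t • H) H 0 := by
    have h := ((hasDerivAt_id (0:ℝ)).smul_const H).const_add Ω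
    simp only [one_smul] at h
    exact h
  have h0 : Ω + (0:ℝ) • H = Ω := by simp
  have hcurve : HasDerivAt (fun t : ℝ => exp (Ω + t • H)) (L H) 0 := by
    refine HasFDerivAt.comp_hasDerivAt 0 ?_ hline
    rw [h0]; exact hdiff
  have hslope : Filter.Tendsto (fun t : ℝ => ‖t⁻¹ • (exp (Ω + t • H) - exp Ω)‖)
      (nhdsWithin 0 (Set.Ioi 0)) (nhds ‖L H‖) := by
    have h1 := hasDerivAt_iff_tendsto_slope.mp hcurve
    have h2 : Filter.Tendsto (slope (fun t : ℝ => exp (Ω + t • H)) 0)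
        (nhdsWithin 0 (Set.Ioi 0)) (nhds (L H)) :=
      h1.mono_left (nhdsWithin_mono 0 (fun x hx => ne_of_gt hx))
    have h3 := h2.norm
    refine h3.congr fun t => ?_
    rw [slope_def_module]
    simp [h0]
  have hub : Filter.Tendsto (fun t : ℝ => ‖H‖ + t * (‖H‖ * (‖H‖ * E)))
      (nhdsWithin 0 (Set.Ioi 0)) (nhds ‖H‖) := by
    have : Filter.Tendsto (fun t : ℝ => ‖H‖ + t * (‖H‖ * (‖H‖ * E))) (nhds 0)
        (nhds (‖H‖ + 0 * (‖H‖ * (‖H‖ * E)))) := by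
      exact (continuous_const.add ((continuous_id.mul continuous_const))).tendsto 0
    simpa using this.mono_left nhdsWithin_le_nhds
  refine le_of_tendsto_of_tendsto hslope hub ?_
  have hmem : Set.Ioc (0:ℝ) 1 ∈ nhdsWithin 0 (Set.Ioi 0) :=
    Ioc_mem_nhdsGT_of_mem (Set.left_mem_Ico.mpr one_pos)
  filter_upwards [hmem] with t ht
  have hkey := key_bound Ω hΩ H ht
  rw [norm_smul, Real.norm_eq_abs, abs_inv, abs_of_pos ht.1]
  rw [← hE] at hkey
  have ht0 : (0:ℝ) < t := ht.1
  calc t⁻¹ * ‖exp (Ω + t • H) - exp Ω‖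
      ≤ t⁻¹ * (t * (‖H‖ + ‖H‖ * (t * ‖H‖ * E))) := by
        exact mul_le_mul_of_nonneg_left hkey (by positivity)
  _ = ‖H‖ + t * ‖H‖ * ‖H‖ * E := by field_simp
  _ ≤ ‖H‖ + t * (‖H‖ * (‖H‖ * E)) := by
      apply le_of_eq; ring


end Aux

theorem stmt7 (Ω : Matrix (Fin 3) (Fin 3) ℝ) (hΩ : Ωᵀ = -Ω)
    (H : Matrix (Fin 3) (Fin 3) ℝ) :
    ‖fderiv ℝ (exp : Matrix (Fin 3) (Fin 3) ℝ → Matrix (Fin 3) (Fin 3) ℝ) Ω H‖ ≤ ‖H‖ :=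
  stmt7_aux Ω hΩ H
end

section
/- For all 3×3 real skew-symmetric matrices Ω and Ω′, the matrix exponential satisfies ‖exp(Ω) − exp(Ω′)‖_F ≤ ‖Ω − Ω′‖_F; that is, exp is 1-Lipschitz on the space of 3×3 skew-symmetric matrices with respect to the Frobenius norm. -/
open scoped Matrix
open NormedSpace

private lemma exp_skew_orth_left (A : Matrix (Fin 3) (Fin 3) ℝ) (hA : Aᵀ = -A) :
    (exp A)ᵀ * exp A = 1 := by
  rw [← Matrix.exp_transpose, hA,
    ← Matrix.exp_add_of_commute (-A) A (Commute.neg_left (Commute.refl A)),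
    neg_add_cancel, exp_zero]

private lemma exp_skew_orth_right (A : Matrix (Fin 3) (Fin 3) ℝ) (hA : Aᵀ = -A) :
    exp A * (exp A)ᵀ = 1 := by
  rw [← Matrix.exp_transpose, hA,
    ← Matrix.exp_add_of_commute A (-A) (Commute.neg_right (Commute.refl A)),
    add_neg_cancel, exp_zero]

-- Matrices carry the Frobenius norm throughout this file.
attribute [local instance] Matrix.frobeniusNormedAddCommGroup Matrix.frobeniusNormedSpace

private lemma col_sq_sum (N : Matrix (Fin 3) (Fin 3) ℝ) (j : Fin 3) :
    ∑ i, ‖N i j‖ ^ (2 : ℝ) = (Nᵀ * N) j j := by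
  rw [Matrix.mul_apply]
  refine Finset.sum_congr rfl fun i _ => ?_
  rw [Matrix.transpose_apply, Real.norm_eq_abs,
    show (2 : ℝ) = ((2 : ℕ) : ℝ) by norm_num, Real.rpow_natCast, sq_abs, sq]

private lemma row_sq_sum (N : Matrix (Fin 3) (Fin 3) ℝ) (i : Fin 3) :
    ∑ j, ‖N i j‖ ^ (2 : ℝ) = (N * Nᵀ) i i := by
  rw [Matrix.mul_apply]
  refine Finset.sum_congr rfl fun j _ => ?_
  rw [Matrix.transpose_apply, Real.norm_eq_abs,
    show (2 : ℝ) = ((2 : ℕ) : ℝ) by norm_num, Real.rpow_natCast, sq_abs, sq]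

private lemma norm_orth_mul (U M : Matrix (Fin 3) (Fin 3) ℝ) (hU : Uᵀ * U = 1) :
    ‖U * M‖ = ‖M‖ := by
  rw [Matrix.frobenius_norm_def, Matrix.frobenius_norm_def]
  congr 1
  rw [Finset.sum_comm, Finset.sum_comm (s := Finset.univ) (t := Finset.univ)
    (f := fun i j => ‖M i j‖ ^ (2 : ℝ))]
  refine Finset.sum_congr rfl fun j _ => ?_
  rw [col_sq_sum, col_sq_sum, Matrix.transpose_mul, Matrix.mul_assoc,
    ← Matrix.mul_assoc Uᵀ U M, hU, Matrix.one_mul]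

private lemma norm_mul_orth (M V : Matrix (Fin 3) (Fin 3) ℝ) (hV : V * Vᵀ = 1) :
    ‖M * V‖ = ‖M‖ := by
  rw [Matrix.frobenius_norm_def, Matrix.frobenius_norm_def]
  congr 1
  refine Finset.sum_congr rfl fun i _ => ?_
  rw [row_sq_sum, row_sq_sum, Matrix.transpose_mul, ← Matrix.mul_assoc, Matrix.mul_assoc M V,
    hV, Matrix.mul_one]

section Deriv

attribute [local instance] Matrix.frobeniusNormedRing Matrix.frobeniusNormedAlgebra

private lemma exp_path_deriv (Ω Ω' : Matrix (Fin 3) (Fin 3) ℝ) (s : ℝ) :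
    HasDerivAt (fun u : ℝ => exp (u • Ω) * exp ((1 - u) • Ω'))
      (exp (s • Ω) * ((Ω - Ω') * exp ((1 - s) • Ω'))) s := by
  have h1 : HasDerivAt (fun u : ℝ => exp (u • Ω)) (exp (s • Ω) * Ω) s :=
    hasDerivAt_exp_smul_const Ω s
  have hh : HasDerivAt (fun u : ℝ => 1 - u) (-1) s := (hasDerivAt_id s).const_sub 1
  have h2 : HasDerivAt (fun u : ℝ => exp ((1 - u) • Ω'))
      ((-1 : ℝ) • (Ω' * exp ((1 - s) • Ω'))) s :=
    (hasDerivAt_exp_smul_const' Ω' (1 - s)).scomp s hh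
  have := h1.mul h2
  refine this.congr_deriv ?_
  simp only [neg_one_smul]
  noncomm_ring

end Deriv

theorem stmt8 (Ω Ω' : Matrix (Fin 3) (Fin 3) ℝ) (hΩ : Ωᵀ = -Ω) (hΩ' : Ω'ᵀ = -Ω') :
    ‖exp Ω - exp Ω'‖ ≤ ‖Ω - Ω'‖ := by
  set f : ℝ → Matrix (Fin 3) (Fin 3) ℝ := fun s => exp (s • Ω) * exp ((1 - s) • Ω') with hf
  have key : ‖f 1 - f 0‖ ≤ ‖Ω - Ω'‖ := by
    apply norm_image_sub_le_of_norm_deriv_le_segment_01'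
      (f' := fun s => exp (s • Ω) * ((Ω - Ω') * exp ((1 - s) • Ω')))
    · intro s _
      exact (exp_path_deriv Ω Ω' s).hasDerivWithinAt
    · intro s _
      have hsΩ : (s • Ω)ᵀ = -(s • Ω) := by rw [Matrix.transpose_smul, hΩ, smul_neg]
      have hsΩ' : ((1 - s) • Ω')ᵀ = -((1 - s) • Ω') := by
        rw [Matrix.transpose_smul, hΩ', smul_neg]
      rw [norm_orth_mul _ _ (exp_skew_orth_left _ hsΩ),
        norm_mul_orth _ _ (exp_skew_orth_right _ hsΩ')]
  have h1 : f 1 = exp Ω := by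
    simp [hf, exp_zero]
  have h0 : f 0 = exp Ω' := by
    simp [hf, exp_zero]
  rwa [h1, h0] at key
end
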